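/- Let A = A1 ×_C A2 with p1, p2 surjective, and let Δ : A → A be a differential operator of order ≤ k such that Δ(ker π1) ⊆ ker π1. Then there exists a unique ℝ-linear map Δ1 : A1 → A1 with π1 ∘ Δ = Δ1 ∘ π1, and Δ1 is a differential operator of order ≤ k on A1. -/

import Mathlib

/-- `δ_a(Δ) = a·Δ − Δ∘(a·)`. -/
noncomputable def deltaOp {A : Type} [CommRing A] [Algebra ℝ A]
    (a : A) (Δ : Module.End ℝ A) : Module.End ℝ A :=
  LinearMap.mulLeft ℝ a ∘ₗ Δ - Δ ∘ₗ LinearMap.mulLeft ℝ a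

/-- `Δ` is a linear differential operator of order `≤ k`. -/
def IsDiffOp {A : Type} [CommRing A] [Algebra ℝ A]
    (k : ℕ) (Δ : Module.End ℝ A) : Prop :=
  ∀ a : Fin (k + 1) → A, (List.ofFn a).foldr deltaOp Δ = 0

/-- The fibered product `A = A₁ ×_C A₂` as a subalgebra of `A₁ × A₂`. -/
noncomputable def fiberProd {A1 A2 C : Type} [CommRing A1] [CommRing A2] [CommRing C]
    [Algebra ℝ A1] [Algebra ℝ A2] [Algebra ℝ C]
    (p1 : A1 →ₐ[ℝ] C) (p2 : A2 →ₐ[ℝ] C) : Subalgebra ℝ (A1 × A2) :=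
  AlgHom.equalizer (p1.comp (AlgHom.fst ℝ A1 A2)) (p2.comp (AlgHom.snd ℝ A1 A2))

/-- Intertwining passes through iterated `deltaOp`. -/
lemma foldr_intertwine {A B : Type} [CommRing A] [Algebra ℝ A] [CommRing B] [Algebra ℝ B]
    (f : A →ₗ[ℝ] B) (hfmul : ∀ a x : A, f (a * x) = f a * f x)
    (l : List A) (D : Module.End ℝ A) (D1 : Module.End ℝ B)
    (h : ∀ x, D1 (f x) = f (D x)) :
    ∀ x, (List.foldr deltaOp D1 (l.map f)) (f x) = f ((List.foldr deltaOp D l) x) := by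
  induction l with
  | nil => exact h
  | cons a l ih =>
    intro x
    simp only [List.map_cons, List.foldr_cons]
    show (deltaOp (f a) (List.foldr deltaOp D1 (l.map f))) (f x)
        = f ((deltaOp a (List.foldr deltaOp D l)) x)
    simp only [deltaOp, LinearMap.sub_apply, LinearMap.comp_apply, LinearMap.mulLeft_apply]
    rw [ih x, ← hfmul a ((List.foldr deltaOp D l) x), ← hfmul a x, ih (a * x), ← map_sub]

/-- if `Δ ∈ Diff_k(A)` preserves `ker π₁`, there is a unique linear
map `Δ₁ : A₁ → A₁` with `π₁ ∘ Δ = Δ₁ ∘ π₁`, and any such `Δ₁` is a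
differential operator of order `≤ k` on `A₁`. -/
theorem diffOp_descends
    {A1 A2 C : Type} [CommRing A1] [CommRing A2] [CommRing C]
    [Algebra ℝ A1] [Algebra ℝ A2] [Algebra ℝ C]
    (p1 : A1 →ₐ[ℝ] C) (p2 : A2 →ₐ[ℝ] C)
    (hp1 : Function.Surjective p1) (hp2 : Function.Surjective p2)
    (k : ℕ) (Δ : Module.End ℝ (fiberProd p1 p2)) (hΔ : IsDiffOp k Δ)
    (hker : ∀ x : fiberProd p1 p2, (x : A1 × A2).1 = 0 → ((Δ x : A1 × A2)).1 = 0) :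
    (∃! Δ1 : Module.End ℝ A1,
        ∀ x : fiberProd p1 p2, Δ1 (x : A1 × A2).1 = ((Δ x : A1 × A2)).1) ∧
    (∀ Δ1 : Module.End ℝ A1,
        (∀ x : fiberProd p1 p2, Δ1 (x : A1 × A2).1 = ((Δ x : A1 × A2)).1) →
        IsDiffOp k Δ1) := by
  let A := fiberProd p1 p2
  let f : A →ₗ[ℝ] A1 := (LinearMap.fst ℝ A1 A2).comp (Subalgebra.val A).toLinearMap
  have hf : ∀ x : A, f x = (x : A1 × A2).1 := fun x => rfl
  have hfsurj : Function.Surjective f := by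
    intro a1
    obtain ⟨a2, ha2⟩ := hp2 (p1 a1)
    refine ⟨⟨(a1, a2), ?_⟩, rfl⟩
    show (p1.comp (AlgHom.fst ℝ A1 A2)) (a1, a2) = (p2.comp (AlgHom.snd ℝ A1 A2)) (a1, a2)
    simpa using ha2.symm
  have hfmul : ∀ a x : A, f (a * x) = f a * f x := fun a x => rfl
  -- construct Δ1
  have hker' : ∀ x ∈ LinearMap.ker f, (f ∘ₗ Δ) x = 0 := by
    intro x hx
    show f (Δ x) = 0
    rw [hf]
    exact hker x (by rw [← hf]; exact LinearMap.mem_ker.mp hx)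
  let e := LinearMap.quotKerEquivOfSurjective f hfsurj
  have he : ∀ x : A, e (Submodule.Quotient.mk x) = f x := fun x => rfl
  let Δ1 : Module.End ℝ A1 :=
    (Submodule.liftQ (LinearMap.ker f) (f ∘ₗ Δ) (fun x hx => hker' x hx)) ∘ₗ
      (e.symm : A1 →ₗ[ℝ] A ⧸ LinearMap.ker f)
  have hΔ1 : ∀ x : A, Δ1 (f x) = f (Δ x) := by
    intro x
    have : e.symm (f x) = Submodule.Quotient.mk x := by
      rw [LinearEquiv.symm_apply_eq, he]
    show ((LinearMap.ker f).liftQ (f ∘ₗ Δ) (fun y hy => hker' y hy)) (e.symm (f x)) = f (Δ x)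
    rw [this]
    rfl
  constructor
  · refine ⟨Δ1, fun x => by rw [← hf, ← hf, hΔ1], ?_⟩
    intro Δ' h'
    apply LinearMap.ext
    intro a1
    obtain ⟨x, rfl⟩ := hfsurj a1
    rw [hΔ1 x, hf, h' x, hf]
  · intro D1 hD1
    have hD1' : ∀ x : A, D1 (f x) = f (Δ x) := fun x => by rw [hf, hD1, hf]
    intro a
    have hb : ∀ i, ∃ b : A, f b = a i := fun i => hfsurj (a i)
    choose b hbf using hb
    have hmap : (List.ofFn b).map f = List.ofFn a := by
      rw [List.map_ofFn]
      exact congrArg List.ofFn (funext fun i => hbf i)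
    apply LinearMap.ext
    intro a1
    obtain ⟨x, rfl⟩ := hfsurj a1
    have := foldr_intertwine f hfmul (List.ofFn b) Δ D1 hD1' x
    rw [hmap] at this
    rw [this, hΔ b, LinearMap.zero_apply, map_zero, LinearMap.zero_apply]
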